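/- Let U be a balanced critical two-dimensional update family with difficulty α, and fix S_B, D̂ and κ as in the α-covering algorithm. Then there exists a constant c > 0 (depending only on U and D̂) such that if D is an α-covered S_B-droplet with respect to A ⊆ ℤ², then D ∩ A contains at least c·diam(D) pairwise disjoint α-clusters. -/

import Mathlib

open MeasureTheory Filter Set

namespace BP

/-- A site of the two-dimensional lattice `ℤ²`. -/
abbrev Site := ℤ × ℤ

/-- One step of the `U`-bootstrap process: a site becomes infected if some update rule,
translated by it, is already entirely infected. -/
def step (U : Finset (Finset Site)) (A : Set Site) : Set Site :=
  A ∪ {x : Site | ∃ X ∈ U, ∀ y ∈ X, x + y ∈ A}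

/-- The sets `A_t` of the `U`-bootstrap process. -/
def iter (U : Finset (Finset Site)) (A : Set Site) : ℕ → Set Site
  | 0 => A
  | t + 1 => step U (iter U A t)

/-- The closure `[A]` of `A` under the `U`-bootstrap process. -/
def bclosure (U : Finset (Finset Site)) (A : Set Site) : Set Site :=
  ⋃ t : ℕ, iter U A t

/-- The inner product of a site with a real vector. -/
noncomputable def ip (x : Site) (u : ℝ × ℝ) : ℝ := (x.1 : ℝ) * u.1 + (x.2 : ℝ) * u.2

/-- The inner product of two real vectors. -/
noncomputable def ipR (v w : ℝ × ℝ) : ℝ := v.1 * w.1 + v.2 * w.2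

/-- `u` is a unit vector, i.e. an element of `S¹`. -/
def unitVec (u : ℝ × ℝ) : Prop := u.1 ^ 2 + u.2 ^ 2 = 1

/-- The discrete half-plane `H_u = {x : ⟨x,u⟩ < 0}`. -/
def halfPlane (u : ℝ × ℝ) : Set Site := {x : Site | ip x u < 0}

/-- `u` is a stable direction for `U`: the half-plane `H_u` is closed under the process. -/
def IsStable (U : Finset (Finset Site)) (u : ℝ × ℝ) : Prop :=
  bclosure U (halfPlane u) = halfPlane u

/-- The stable set `S = S(U)`, as a set of unit vectors. -/
def stableSet (U : Finset (Finset Site)) : Set (ℝ × ℝ) :=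
  {u | unitVec u ∧ IsStable U u}

/-- The discrete line `ℓ_u` through the origin perpendicular to `u`. -/
def line (u : ℝ × ℝ) : Set Site := {x | ip x u = 0}

/-- The perpendicular vector pointing to the right as one looks in the direction `u`. -/
def rightPerp (u : ℝ × ℝ) : ℝ × ℝ := (u.2, -u.1)

/-- `ℓ_u⁺`: the origin together with the sites of `ℓ_u` to the right of the origin
(as one looks in the direction `u`). -/
def linePlus (u : ℝ × ℝ) : Set Site := {x | ip x u = 0 ∧ 0 ≤ ip x (rightPerp u)}

/-- `ℓ_u⁻`: the origin together with the sites of `ℓ_u` to the left of the origin. -/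
def lineMinus (u : ℝ × ℝ) : Set Site := {x | ip x u = 0 ∧ ip x (rightPerp u) ≤ 0}

/-- `α⁺(u)`: the minimum cardinality of a finite set `Z ⊆ ℤ²` such that `[H_u ∪ Z]`
contains infinitely many sites of `ℓ_u⁺` (and `⊤ = ∞` if there is no such set). -/
noncomputable def alphaPlus (U : Finset (Finset Site)) (u : ℝ × ℝ) : ℕ∞ :=
  sInf {n : ℕ∞ | ∃ Z : Finset Site, (Z.card : ℕ∞) = n ∧
    (bclosure U (halfPlane u ∪ ↑Z) ∩ linePlus u).Infinite}

/-- `α⁻(u)`: as `α⁺(u)`, but for `ℓ_u⁻`. -/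
noncomputable def alphaMinus (U : Finset (Finset Site)) (u : ℝ × ℝ) : ℕ∞ :=
  sInf {n : ℕ∞ | ∃ Z : Finset Site, (Z.card : ℕ∞) = n ∧
    (bclosure U (halfPlane u ∪ ↑Z) ∩ lineMinus u).Infinite}

/-- The difficulty `α(u)` of a direction `u`: `min {α⁺(u), α⁻(u)}` if both are finite,
and `∞` otherwise. -/
noncomputable def difficulty (U : Finset (Finset Site)) (u : ℝ × ℝ) : ℕ∞ :=
  if alphaPlus U u ≠ ⊤ ∧ alphaMinus U u ≠ ⊤ then min (alphaPlus U u) (alphaMinus U u)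
  else ⊤

/-- `ᾱ(u) = min {α⁺(u), α⁻(u)}`. -/
noncomputable def alphaBar (U : Finset (Finset Site)) (u : ℝ × ℝ) : ℕ∞ :=
  min (alphaPlus U u) (alphaMinus U u)

/-- The difficulty `α = α(U)` of the update family `U`: the minimum over open
semicircles `C` of the maximum of `α(u)` over `u ∈ C`.  (An open semicircle is
parametrised by its midpoint `w`.) -/
noncomputable def famDifficulty (U : Finset (Finset Site)) : ℕ∞ :=
  ⨅ (w : ℝ × ℝ) (_ : unitVec w),
    ⨆ (u : ℝ × ℝ) (_ : unitVec u) (_ : 0 < ipR u w), difficulty U u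

/-- `U` is critical: some (closed) semicircle has finite intersection with the stable
set, and every open semicircle meets the stable set. -/
def Critical (U : Finset (Finset Site)) : Prop :=
  (∃ w : ℝ × ℝ, unitVec w ∧ (stableSet U ∩ {u | 0 ≤ ipR u w}).Finite) ∧
  (∀ w : ℝ × ℝ, unitVec w → (stableSet U ∩ {u | 0 < ipR u w}).Nonempty)

/-- The balancedness condition: some closed semicircle `C` has `α(u) ≤ α(U)`
for every `u ∈ C`.  A critical family is balanced iff this holds, unbalanced otherwise. -/
def BalancedCond (U : Finset (Finset Site)) : Prop :=
  ∃ w : ℝ × ℝ, unitVec w ∧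
    ∀ u : ℝ × ℝ, unitVec u → 0 ≤ ipR u w → difficulty U u ≤ famDifficulty U

/-- The time `τ` at which the origin is infected (`⊤ = ∞` if it never is). -/
noncomputable def tau (U : Finset (Finset Site)) (A : Set Site) : ℕ∞ :=
  ⨅ (t : ℕ) (_ : (0 : Site) ∈ iter U A t), (t : ℕ∞)

/-- Configurations of initially infected sites in the plane. -/
abbrev Config := Site → Bool

/-- The set of initially infected sites of a configuration. -/
def initSet (ω : Config) : Set Site := {x | ω x = true}

/-- `μ` is the product Bernoulli(`p`) measure (law of a "`p`-random set"): a probability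
measure giving every cylinder event its product probability. -/
def IsBernoulliProduct {ι : Type*} (p : ℝ) (μ : Measure (ι → Bool)) : Prop :=
  IsProbabilityMeasure μ ∧
    ∀ S : Finset ι, ∀ f : ι → Bool,
      μ {ω | ∀ x ∈ S, ω x = f x} =
        ∏ x ∈ S, if f x then ENNReal.ofReal p else ENNReal.ofReal (1 - p)

/-- Reduction of a site modulo `n`, giving a point of the torus `ℤ_n²`. -/
def projT (n : ℕ) (y : Site) : ZMod n × ZMod n := ((y.1 : ZMod n), (y.2 : ZMod n))

/-- One step of the `U`-bootstrap process on the torus `ℤ_n²`. -/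
def stepT (n : ℕ) (U : Finset (Finset Site)) (A : Set (ZMod n × ZMod n)) :
    Set (ZMod n × ZMod n) :=
  A ∪ {x | ∃ X ∈ U, ∀ y ∈ X, x + projT n y ∈ A}

/-- The sets `A_t` of the `U`-bootstrap process on the torus. -/
def iterT (n : ℕ) (U : Finset (Finset Site)) (A : Set (ZMod n × ZMod n)) :
    ℕ → Set (ZMod n × ZMod n)
  | 0 => A
  | t + 1 => stepT n U (iterT n U A t)

/-- The closure of `A` under the `U`-bootstrap process on the torus. -/
def bclosureT (n : ℕ) (U : Finset (Finset Site)) (A : Set (ZMod n × ZMod n)) :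
    Set (ZMod n × ZMod n) :=
  ⋃ t : ℕ, iterT n U A t

/-- `A` percolates on the torus `ℤ_n²`. -/
def PercolatesT (n : ℕ) (U : Finset (Finset Site)) (A : Set (ZMod n × ZMod n)) : Prop :=
  bclosureT n U A = Set.univ

/-- The critical probability `p_c(ℤ_n², U)`, where `P` is the family of product
Bernoulli measures on subsets of the torus. -/
noncomputable def pcT (n : ℕ) (U : Finset (Finset Site))
    (P : ℝ → Measure ((ZMod n × ZMod n) → Bool)) : ℝ :=
  sInf {p : ℝ | p ∈ Set.Icc (0 : ℝ) 1 ∧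
    1 / 2 ≤ P p {ω | PercolatesT n U {x | ω x = true}}}

/-- The Euclidean (`ℓ₂`) distance between two sites. -/
noncomputable def dist2 (x y : Site) : ℝ :=
  Real.sqrt ((((x.1 - y.1 : ℤ) : ℝ)) ^ 2 + (((x.2 - y.2 : ℤ) : ℝ)) ^ 2)

/-- A set of sites is (strongly) connected in the graph `G_κ` joining sites at
Euclidean distance at most `κ`. -/
def Conn (κ : ℝ) (S : Set Site) : Prop :=
  ∀ x ∈ S, ∀ y ∈ S,
    Relation.ReflTransGen (fun a b : Site => b ∈ S ∧ dist2 a b ≤ κ) x y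

/-- The range `ν` of the update family:
`ν = max {‖x − y‖₂ : x, y ∈ X ∪ {0}, X ∈ U}`. -/
noncomputable def nu (U : Finset (Finset Site)) : ℝ :=
  sSup {d : ℝ | ∃ X ∈ U, ∃ x ∈ insert (0 : Site) X, ∃ y ∈ insert (0 : Site) X,
    d = dist2 x y}

/-- The diameter of a set of sites. -/
noncomputable def diam2 (K : Set Site) : ℝ :=
  sSup {d : ℝ | ∃ x ∈ K, ∃ y ∈ K, d = dist2 x y}

/-- The projection `π(K, u) = max {|⟨x − y, u⟩| : x, y ∈ K}`. -/
noncomputable def proj (K : Set Site) (u : ℝ × ℝ) : ℝ :=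
  sSup {d : ℝ | ∃ x ∈ K, ∃ y ∈ K, d = |ip x u - ip y u|}

/-- A `T`-droplet: a nonempty intersection of translated half-planes `H_u + a_u`,
`u ∈ T`. -/
def IsDroplet (T : Set (ℝ × ℝ)) (D : Set Site) : Prop :=
  D.Nonempty ∧ ∃ a : (ℝ × ℝ) → Site, D = ⋂ u ∈ T, {x : Site | ip (x - a u) u < 0}

/-- `D` is the smallest `T`-droplet containing `K`. -/
def IsMinDroplet (T : Set (ℝ × ℝ)) (K D : Set Site) : Prop :=
  IsDroplet T D ∧ K ⊆ D ∧ ∀ D' : Set Site, IsDroplet T D' → K ⊆ D' → D ⊆ D'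

/-- An `a`-cluster: a strongly connected set of `a` sites. -/
def IsCluster (κ : ℝ) (a : ℕ) (B : Finset Site) : Prop :=
  B.card = a ∧ Conn κ ↑B

/-- One step of the `α`-covering algorithm: two droplets of the current collection lying
within strong-connectivity reach of a common translate of `D̂` are replaced by the
smallest `S_B`-droplet containing their union. -/
inductive CoverStep (SB : Set (ℝ × ℝ)) (κ : ℝ) (Dhat : Set Site) :
    Multiset (Set Site) → Multiset (Set Site) → Prop
  | merge (rest : Multiset (Set Site)) (D₁ D₂ D' : Set Site) (x : Site) :
      Conn κ (D₁ ∪ D₂ ∪ ((fun z => z + x) '' Dhat)) →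
      IsMinDroplet SB (D₁ ∪ D₂) D' →
      CoverStep SB κ Dhat (D₁ ::ₘ D₂ ::ₘ rest) (D' ::ₘ rest)

/-- `𝒟` is an `α`-cover of `K`: a possible output of the `α`-covering algorithm, started
from a maximal collection of pairwise disjoint `a`-clusters of `K`, each contained in a
translate of `D̂`. -/
def IsAlphaCover (κ : ℝ) (a : ℕ) (SB : Set (ℝ × ℝ)) (Dhat : Set Site)
    (K : Set Site) (𝒟 : Multiset (Set Site)) : Prop :=
  ∃ B : List (Finset Site), ∃ c : List Site,
    B.length = c.length ∧
    (∀ Bi ∈ B, IsCluster κ a Bi ∧ ↑Bi ⊆ K) ∧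
    B.Pairwise (fun B₁ B₂ => Disjoint B₁ B₂) ∧
    (∀ B' : Finset Site, IsCluster κ a B' → ↑B' ⊆ K → ∃ Bi ∈ B, ¬ Disjoint B' Bi) ∧
    (∀ i : ℕ, ∀ h₁ : i < B.length, ∀ h₂ : i < c.length,
      ↑(B.get ⟨i, h₁⟩) ⊆ (fun z => z + c.get ⟨i, h₂⟩) '' Dhat) ∧
    Relation.ReflTransGen (CoverStep SB κ Dhat)
      ↑(c.map fun v => (fun z => z + v) '' Dhat) 𝒟

/-- The droplet `D` is `α`-covered (with respect to the initial set `A`). -/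
def AlphaCovered (κ : ℝ) (a : ℕ) (SB : Set (ℝ × ℝ)) (Dhat : Set Site)
    (A D : Set Site) : Prop :=
  IsAlphaCover κ a SB Dhat (D ∩ A) {D}

/-- The constant `ρ` used for balanced families:
`ρ = max {‖y − Z‖₂ : u ∈ S_B, |Z| = α − 1, y ∈ [H_u ∪ Z] ∖ H_u}`. -/
noncomputable def rho (U : Finset (Finset Site)) (SB : Set (ℝ × ℝ)) (a : ℕ) : ℝ :=
  sSup {d : ℝ | ∃ u ∈ SB, ∃ Z : Finset Site, Z.card = a - 1 ∧
    ∃ y ∈ bclosure U (halfPlane u ∪ ↑Z) \ halfPlane u,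
      d = sInf {r : ℝ | ∃ z ∈ Z, r = dist2 y z}}

/-- The connectivity constant `κ = 2(ρ + ν)` for balanced families. -/
noncomputable def kappaB (U : Finset (Finset Site)) (SB : Set (ℝ × ℝ)) (a : ℕ) : ℝ :=
  2 * (rho U SB a + nu U)

/-- A valid choice of the finite set `S_B` of stable directions for a balanced family:
`ᾱ(u) ≥ α` for all `u ∈ S_B`, and `S_B` meets every open semicircle. -/
def ValidSB (U : Finset (Finset Site)) (a : ℕ) (SB : Set (ℝ × ℝ)) : Prop :=
  SB.Finite ∧ SB ⊆ stableSet U ∧ (∀ u ∈ SB, (a : ℕ∞) ≤ alphaBar U u) ∧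
  ∀ w : ℝ × ℝ, unitVec w → ∃ u ∈ SB, 0 < ipR u w

/-- `D` is internally spanned by `A`: some strongly connected subset `L` of `[D ∩ A]`
has `D` as the smallest `T`-droplet containing it. -/
def InternallySpanned (U : Finset (Finset Site)) (T : Set (ℝ × ℝ)) (κ : ℝ)
    (A D : Set Site) : Prop :=
  ∃ L : Set Site, L ⊆ bclosure U (D ∩ A) ∧ Conn κ L ∧ IsMinDroplet T L D

/-- A valid choice of the set `S_U = {u*, −u*, u^l, u^r}` of stable directions for an
unbalanced family: `min {α(u*), α(−u*)} ≥ α + 1`, `u^l` (resp. `u^r`) lies in the open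
semicircle to the left (resp. right) of `u*`, and `min {ᾱ(u^l), ᾱ(u^r)} = α`. -/
def ValidSU (U : Finset (Finset Site)) (a : ℕ) (ustar ul ur : ℝ × ℝ) : Prop :=
  ustar ∈ stableSet U ∧ -ustar ∈ stableSet U ∧ ul ∈ stableSet U ∧ ur ∈ stableSet U ∧
  (a : ℕ∞) + 1 ≤ difficulty U ustar ∧ (a : ℕ∞) + 1 ≤ difficulty U (-ustar) ∧
  0 < ipR ul (-ustar.2, ustar.1) ∧ 0 < ipR ur (ustar.2, -ustar.1) ∧
  min (alphaBar U ul) (alphaBar U ur) = (a : ℕ∞)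

/-- The point of `S¹` at angle `θ`. -/
noncomputable def circlePt (θ : ℝ) : ℝ × ℝ := (Real.cos θ, Real.sin θ)

/-- `u` is a rational direction: it is parallel to a nonzero integer vector,
i.e. it has rational or infinite slope. -/
def RationalDir (u : ℝ × ℝ) : Prop :=
  ∃ x : Site, x ≠ 0 ∧ (x.1 : ℝ) * u.2 = (x.2 : ℝ) * u.1

/-- The closed arc of directions from `u` to `v` (anticlockwise). -/
def arcFrom (u v : ℝ × ℝ) : Set (ℝ × ℝ) :=
  {w | ∃ θ₁ θ₂ θ : ℝ, circlePt θ₁ = u ∧ circlePt θ₂ = v ∧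
    θ₁ ≤ θ₂ ∧ θ₂ < θ₁ + 2 * Real.pi ∧ θ ∈ Set.Icc θ₁ θ₂ ∧ circlePt θ = w}

/-- `u` and `v` are consecutive elements of `T`:
`u ≠ v` and `T ∩ [u, v] = {u, v}`. -/
def ConsecutiveIn (T : Set (ℝ × ℝ)) (u v : ℝ × ℝ) : Prop :=
  u ≠ v ∧ T ∩ arcFrom u v = {u, v}

/-! ### Auxiliary material for the proof of the extremal lemma -/

/-- The real vector associated to a site. -/
noncomputable def cst (x : Site) : ℝ × ℝ := ((x.1 : ℝ), (x.2 : ℝ))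

/-- The Euclidean norm on `ℝ × ℝ`. -/
noncomputable def n2 (z : ℝ × ℝ) : ℝ := Real.sqrt (z.1 ^ 2 + z.2 ^ 2)

lemma n2_nonneg (z : ℝ × ℝ) : 0 ≤ n2 z := Real.sqrt_nonneg _

lemma sq_n2 (z : ℝ × ℝ) : n2 z ^ 2 = z.1 ^ 2 + z.2 ^ 2 := Real.sq_sqrt (by positivity)

lemma le_of_sq_le {x y : ℝ} (hy : 0 ≤ y) (h : x ^ 2 ≤ y ^ 2) : x ≤ y := by
  nlinarith [sq_nonneg (x - y), sq_nonneg (x + y)]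

lemma ipR_le_n2_mul (z w : ℝ × ℝ) : ipR z w ≤ n2 z * n2 w := by
  apply le_of_sq_le (mul_nonneg (n2_nonneg _) (n2_nonneg _))
  rw [mul_pow, sq_n2, sq_n2, ipR]
  nlinarith [sq_nonneg (z.1 * w.2 - z.2 * w.1)]

lemma n2_triangle (z w : ℝ × ℝ) : n2 (z + w) ≤ n2 z + n2 w := by
  apply le_of_sq_le (add_nonneg (n2_nonneg _) (n2_nonneg _))
  have h := ipR_le_n2_mul z w
  have h1 := sq_n2 (z + w)
  have h2 := sq_n2 z
  have h3 := sq_n2 w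
  simp only [Prod.fst_add, Prod.snd_add] at h1
  rw [ipR] at h
  nlinarith

lemma ip_eq_ipR (x : Site) (u : ℝ × ℝ) : ip x u = ipR (cst x) u := rfl

lemma dist2_eq_n2 (x y : Site) : dist2 x y = n2 (cst x - cst y) := by
  simp only [dist2, n2, cst, Prod.fst_sub, Prod.snd_sub]
  push_cast
  ring_nf

lemma dist2_nonneg (x y : Site) : 0 ≤ dist2 x y := Real.sqrt_nonneg _

lemma dist2_symm (x y : Site) : dist2 x y = dist2 y x := by
  simp only [dist2]
  congr 1
  push_cast
  ring

lemma dist2_self (x : Site) : dist2 x x = 0 := by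
  simp [dist2]

lemma dist2_triangle (x y z : Site) : dist2 x z ≤ dist2 x y + dist2 y z := by
  rw [dist2_eq_n2, dist2_eq_n2, dist2_eq_n2]
  have : cst x - cst z = (cst x - cst y) + (cst y - cst z) := by ring
  rw [this]
  exact n2_triangle _ _

lemma dist2_translate (x y v : Site) : dist2 (x + v) (y + v) = dist2 x y := by
  simp only [dist2, Prod.fst_add, Prod.snd_add]
  ring_nf

lemma ip_sub (x y : Site) (u : ℝ × ℝ) : ip (x - y) u = ip x u - ip y u := by
  simp only [ip, Prod.fst_sub, Prod.snd_sub]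
  push_cast
  ring

lemma ip_add (x y : Site) (u : ℝ × ℝ) : ip (x + y) u = ip x u + ip y u := by
  simp only [ip, Prod.fst_add, Prod.snd_add]
  push_cast
  ring

lemma rho_nonneg (U : Finset (Finset Site)) (SB : Set (ℝ × ℝ)) (a : ℕ) :
    0 ≤ rho U SB a := by
  apply Real.sSup_nonneg
  rintro d ⟨u, _, Z, _, y, _, rfl⟩
  apply Real.sInf_nonneg
  rintro r ⟨z, _, rfl⟩
  exact dist2_nonneg _ _

lemma nu_nonneg (U : Finset (Finset Site)) : 0 ≤ nu U := by
  apply Real.sSup_nonneg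
  rintro d ⟨X, _, x, _, y, _, rfl⟩
  exact dist2_nonneg _ _

lemma kappaB_nonneg (U : Finset (Finset Site)) (SB : Set (ℝ × ℝ)) (a : ℕ) :
    0 ≤ kappaB U SB a := by
  have h1 := rho_nonneg U SB a
  have h2 := nu_nonneg U
  unfold kappaB
  linarith

/-- An integer multiple of a small nonzero real can be placed in any window of width 1. -/
lemma int_step {c : ℝ} (hc0 : c ≠ 0) (hc1 : |c| ≤ 1) (t : ℝ) :
    ∃ k : ℤ, t < (k : ℝ) * c ∧ (k : ℝ) * c ≤ t + 1 := by
  rcases lt_or_gt_of_ne hc0 with hneg | hpos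
  · refine ⟨⌈t / c⌉ - 1, ?_, ?_⟩
    · have h1 : ((⌈t / c⌉ : ℝ) - 1) < t / c := by
        push_cast
        have := Int.ceil_lt_add_one (t / c)
        linarith
      have := (lt_div_iff_of_neg hneg).mp h1
      push_cast
      linarith
    · have h1 : t / c ≤ (⌈t / c⌉ : ℝ) := Int.le_ceil _
      have h2 : ((⌈t / c⌉ : ℝ)) * c ≤ t := by
        have := mul_le_mul_of_nonpos_right h1 (le_of_lt hneg)
        rwa [div_mul_cancel₀ t hc0] at this
      have habs : -c ≤ 1 := by rwa [abs_of_neg hneg] at hc1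
      push_cast
      nlinarith
  · refine ⟨⌊t / c⌋ + 1, ?_, ?_⟩
    · have h1 : t / c < (⌊t / c⌋ : ℝ) + 1 := Int.lt_floor_add_one _
      have := (div_lt_iff₀ hpos).mp h1
      push_cast
      linarith [mul_comm ((⌊t / c⌋ : ℝ) + 1) c]
    · have h1 : (⌊t / c⌋ : ℝ) ≤ t / c := Int.floor_le _
      have h2 : ((⌊t / c⌋ : ℝ)) * c ≤ t := by
        have := mul_le_mul_of_nonneg_right h1 (le_of_lt hpos)
        rwa [div_mul_cancel₀ t hc0] at this
      have habs : c ≤ 1 := by rwa [abs_of_pos hpos] at hc1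
      push_cast
      nlinarith

/-- For a unit vector `u` there is a site whose `ip` with `u` lies in any window
`(t, t+1]`. -/
lemma exists_tangent {u : ℝ × ℝ} (hu : u.1 ^ 2 + u.2 ^ 2 = 1) (t : ℝ) :
    ∃ aa : Site, t < ip aa u ∧ ip aa u ≤ t + 1 := by
  by_cases h1 : u.1 ≠ 0
  · have habs : |u.1| ≤ 1 := by
      apply le_of_sq_le (by norm_num)
      rw [sq_abs]; nlinarith
    obtain ⟨k, hk1, hk2⟩ := int_step h1 habs t
    exact ⟨(k, 0), by simpa [ip] using hk1, by simpa [ip] using hk2⟩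
  · push_neg at h1
    have h2 : u.2 ≠ 0 := by
      intro h2; rw [h1, h2] at hu; norm_num at hu
    have habs : |u.2| ≤ 1 := by
      apply le_of_sq_le (by norm_num)
      rw [sq_abs]; nlinarith
    obtain ⟨k, hk1, hk2⟩ := int_step h2 habs t
    exact ⟨(0, k), by simpa [ip] using hk1, by simpa [ip] using hk2⟩

/-- From `κ`-connectivity of `E₁ ∪ E₂ ∪ H`, where `H` has diameter at most `dh`,
one finds points of `E₁` and `E₂` at distance at most `dh + 2κ`. -/
lemma conn_gap {κ dh : ℝ} (hκ : 0 ≤ κ) (hdh : 0 ≤ dh) {E₁ E₂ H : Set Site}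
    (hH : ∀ h₁ ∈ H, ∀ h₂ ∈ H, dist2 h₁ h₂ ≤ dh)
    (hc : Conn κ (E₁ ∪ E₂ ∪ H)) {p₁ p₂ : Site} (hp₁ : p₁ ∈ E₁) (hp₂ : p₂ ∈ E₂) :
    ∃ q₁ ∈ E₁, ∃ q₂ ∈ E₂, dist2 q₁ q₂ ≤ dh + 2 * κ := by
  have key : ∀ z, Relation.ReflTransGen
      (fun a b : Site => b ∈ E₁ ∪ E₂ ∪ H ∧ dist2 a b ≤ κ) p₁ z →
      (∃ q₁ ∈ E₁, ∃ q₂ ∈ E₂, dist2 q₁ q₂ ≤ dh + 2 * κ) ∨ z ∈ E₁ ∨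
        (z ∈ H ∧ ∃ q₁ ∈ E₁, ∃ h₀ ∈ H, dist2 q₁ h₀ ≤ κ) := by
    intro z h
    induction h with
    | refl => exact Or.inr (Or.inl hp₁)
    | @tail b c hb hbc ih =>
      obtain ⟨hc', hdz⟩ := hbc
      rcases ih with hGG | hz₁ | ⟨hzH, q₁, hq₁, h₀, hh₀, hqh⟩
      · exact Or.inl hGG
      · rcases hc' with (h | h) | h
        · exact Or.inr (Or.inl h)
        · exact Or.inl ⟨b, hz₁, c, h, by linarith⟩
        · exact Or.inr (Or.inr ⟨h, b, hz₁, c, h, hdz⟩)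
      · rcases hc' with (h | h) | h
        · exact Or.inr (Or.inl h)
        · refine Or.inl ⟨q₁, hq₁, c, h, ?_⟩
          have hbH := hH h₀ hh₀ b hzH
          calc dist2 q₁ c ≤ dist2 q₁ h₀ + dist2 h₀ c := dist2_triangle _ _ _
            _ ≤ dist2 q₁ h₀ + (dist2 h₀ b + dist2 b c) := by
                linarith [dist2_triangle h₀ b c]
            _ ≤ dh + 2 * κ := by linarith
        · exact Or.inr (Or.inr ⟨h, q₁, hq₁, h₀, hh₀, hqh⟩)
  have hmain := key p₂ (hc p₁ (Or.inl (Or.inl hp₁)) p₂ (Or.inl (Or.inr hp₂)))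
  rcases hmain with hGG | h | ⟨hpH, q₁, hq₁, h₀, hh₀, hqh⟩
  · exact hGG
  · exact ⟨p₂, h, p₂, hp₂, by rw [dist2_self]; linarith⟩
  · refine ⟨q₁, hq₁, p₂, hp₂, ?_⟩
    have := hH h₀ hh₀ p₂ hpH
    calc dist2 q₁ p₂ ≤ dist2 q₁ h₀ + dist2 h₀ p₂ := dist2_triangle _ _ _
      _ ≤ dh + 2 * κ := by linarith

lemma continuous_ipR (a : ℝ × ℝ) : Continuous fun w : ℝ × ℝ => ipR a w := by
  unfold ipR
  fun_prop

lemma ipR_cst_sub (x y : Site) (u : ℝ × ℝ) :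
    ipR (cst x - cst y) u = ip x u - ip y u := by
  simp only [ipR, cst, ip, Prod.fst_sub, Prod.snd_sub]
  ring

/-- The data carried along the covering algorithm: a droplet, an anchor point inside it,
an upper bound for the supports in the stable directions, and a weight. -/
def GoodDat (SB : Set (ℝ × ℝ)) (SBf : Finset (ℝ × ℝ)) (lam : (ℝ × ℝ) → ℝ) (C₁ : ℝ)
    (w : Set Site × Site × ((ℝ × ℝ) → ℝ) × ℕ) : Prop :=
  1 ≤ w.2.2.2 ∧ w.2.1 ∈ w.1 ∧ (∀ u ∈ SB, ∀ x ∈ w.1, ip x u ≤ w.2.2.1 u) ∧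
    (∀ u ∈ SB, ip w.2.1 u ≤ w.2.2.1 u) ∧
    ∑ u ∈ SBf, lam u * (w.2.2.1 u - ip w.2.1 u) ≤ C₁ * (2 * (w.2.2.2 : ℝ) - 1)

/-- The invariant of the covering algorithm. -/
def InvDat (SB : Set (ℝ × ℝ)) (SBf : Finset (ℝ × ℝ)) (lam : (ℝ × ℝ) → ℝ) (C₁ : ℝ)
    (k : ℕ) (M : Multiset (Set Site)) : Prop :=
  ∃ W : Multiset (Set Site × Site × ((ℝ × ℝ) → ℝ) × ℕ),
    W.map (fun w => w.1) = M ∧ (W.map (fun w => w.2.2.2)).sum = k ∧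
      ∀ w ∈ W, GoodDat SB SBf lam C₁ w

/-- A merge step of the covering algorithm preserves the invariant. -/
lemma step_preserve (SB : Set (ℝ × ℝ)) (SBf : Finset (ℝ × ℝ))
    (hmem : ∀ u : ℝ × ℝ, u ∈ SBf ↔ u ∈ SB)
    (hunit : ∀ u ∈ SBf, u.1 ^ 2 + u.2 ^ 2 = 1)
    (lam : (ℝ × ℝ) → ℝ) (δ : ℝ) (hδpos : 0 < δ)
    (hlamδ : ∀ v ∈ SBf, δ ≤ lam v)
    (hlam0 : ∀ z : ℝ × ℝ, ∑ v ∈ SBf, lam v * ipR z v = 0)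
    (κ dh : ℝ) (hκ0 : 0 ≤ κ) (hdh0 : 0 ≤ dh)
    (Dhat : Set Site) (hDdiam : ∀ z ∈ Dhat, ∀ z' ∈ Dhat, dist2 z z' ≤ dh)
    (C₁ : ℝ) (hC₁L : (∑ v ∈ SBf, lam v) * (dh + 2 * κ + 1) ≤ C₁)
    (k : ℕ) (M M' : Multiset (Set Site)) (hs : CoverStep SB κ Dhat M M')
    (h : InvDat SB SBf lam C₁ k M) : InvDat SB SBf lam C₁ k M' := by
  classical
  cases hs with
  | merge rest D₁ D₂ D' x hconn hmin =>
    obtain ⟨W, hWfst, hWsum, hWgood⟩ := h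
    obtain ⟨w₁, hw₁W, hw₁D, hW1⟩ := (Multiset.map_eq_cons _ _ _ _).mpr hWfst
    obtain ⟨w₂, hw₂W', hw₂D, hW2⟩ := (Multiset.map_eq_cons _ _ _ _).mpr hW1
    have hw₂W : w₂ ∈ W := Multiset.mem_of_mem_erase hw₂W'
    have hg₁ := hWgood w₁ hw₁W
    have hg₂ := hWgood w₂ hw₂W
    obtain ⟨E₁', p₁, b₁, n₁⟩ := w₁
    obtain ⟨E₂', p₂, b₂, n₂⟩ := w₂
    simp only at hw₁D hw₂D
    subst hw₁D
    subst hw₂D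
    obtain ⟨hn₁, hp₁E, hb₁, hpb₁, hS₁⟩ := hg₁
    obtain ⟨hn₂, hp₂E, hb₂, hpb₂, hS₂⟩ := hg₂
    simp only at hn₁ hp₁E hb₁ hpb₁ hS₁ hn₂ hp₂E hb₂ hpb₂ hS₂
    set g := dh + 2 * κ with hgdef
    have hg0 : 0 ≤ g := by simp only [hgdef]; linarith
    -- close points of the two droplets
    obtain ⟨q₁, hq₁, q₂, hq₂, hqd⟩ :=
      conn_gap hκ0 hdh0 (H := (fun z => z + x) '' Dhat)
        (by rintro _ ⟨z₁, hz₁, rfl⟩ _ ⟨z₂, hz₂, rfl⟩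
            rw [dist2_translate]
            exact hDdiam z₁ hz₁ z₂ hz₂)
        hconn hp₁E hp₂E
    -- tangent droplet
    have hex : ∀ u : ℝ × ℝ, ∃ aa : Site, u ∈ SB →
        (max (b₁ u) (b₂ u) < ip aa u ∧ ip aa u ≤ max (b₁ u) (b₂ u) + 1) := by
      intro u
      by_cases hu : u ∈ SB
      · obtain ⟨aa, h1, h2⟩ := exists_tangent (hunit u ((hmem u).2 hu)) (max (b₁ u) (b₂ u))
        exact ⟨aa, fun _ => ⟨h1, h2⟩⟩
      · exact ⟨0, fun hc => absurd hc hu⟩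
    choose aa haa using hex
    have hEmem : ∀ z : Site, z ∈ (⋂ u ∈ SB, {z : Site | ip (z - aa u) u < 0}) ↔
        ∀ u ∈ SB, ip z u < ip (aa u) u := by
      intro z
      simp only [Set.mem_iInter, Set.mem_setOf_eq, ip_sub]
      constructor
      · intro h u hu; linarith [h u hu]
      · intro h u hu; linarith [h u hu]
    have hKE : E₁' ∪ E₂' ⊆ ⋂ u ∈ SB, {z : Site | ip (z - aa u) u < 0} := by
      rintro z (hz | hz)
      · exact (hEmem z).2 fun u hu =>
          lt_of_le_of_lt (le_trans (hb₁ u hu z hz) (le_max_left _ _)) (haa u hu).1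
      · exact (hEmem z).2 fun u hu =>
          lt_of_le_of_lt (le_trans (hb₂ u hu z hz) (le_max_right _ _)) (haa u hu).1
    have hD'E : D' ⊆ ⋂ u ∈ SB, {z : Site | ip (z - aa u) u < 0} :=
      hmin.2.2 _ ⟨⟨p₁, hKE (Or.inl hp₁E)⟩, aa, rfl⟩ hKE
    have hb' : ∀ u ∈ SB, ∀ z ∈ D', ip z u ≤ max (b₁ u) (b₂ u) + 1 := by
      intro u hu z hz
      exact le_trans (le_of_lt ((hEmem z).1 (hD'E hz) u hu)) (haa u hu).2
    -- the new data
    refine ⟨(D', p₁, fun u => max (b₁ u) (b₂ u) + 1, n₁ + n₂) ::ₘ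
      (W.erase (E₁', p₁, b₁, n₁)).erase (E₂', p₂, b₂, n₂), ?_, ?_, ?_⟩
    · rw [Multiset.map_cons, hW2]
    · have hWeq : W = (E₁', p₁, b₁, n₁) ::ₘ (E₂', p₂, b₂, n₂) ::ₘ
          (W.erase (E₁', p₁, b₁, n₁)).erase (E₂', p₂, b₂, n₂) := by
        rw [Multiset.cons_erase hw₂W', Multiset.cons_erase hw₁W]
      rw [hWeq] at hWsum
      simp only [Multiset.map_cons, Multiset.sum_cons] at hWsum ⊢
      rw [Nat.add_assoc]
      exact hWsum
    · intro w hw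
      rcases Multiset.mem_cons.mp hw with rfl | hw
      · -- the merged element is good
        have hp₁D' : p₁ ∈ D' := hmin.2.1 (Or.inl hp₁E)
        refine ⟨by show 1 ≤ n₁ + n₂; omega, hp₁D', ?_, ?_, ?_⟩
        · intro u hu z hz
          exact hb' u hu z hz
        · intro u hu
          have h1 := hpb₁ u hu
          have h2 : b₁ u ≤ max (b₁ u) (b₂ u) := le_max_left _ _
          simp only
          linarith
        · -- the sum estimate
          simp only
          have key : ∀ u ∈ SBf, lam u * (max (b₁ u) (b₂ u) + 1 - ip p₁ u) ≤
              lam u * (b₁ u - ip p₁ u) + lam u * (b₂ u - ip p₂ u) +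
                lam u * ipR (cst p₂ - cst q₂) u + lam u * (g + 1) := by
            intro u hu
            have huSB := (hmem u).1 hu
            have hq₁b : ip q₁ u ≤ b₁ u := hb₁ u huSB q₁ hq₁
            have hq₂b : ip q₂ u ≤ b₂ u := hb₂ u huSB q₂ hq₂
            have hqq : ip q₂ u - ip q₁ u ≤ g := by
              rw [← ipR_cst_sub]
              refine le_trans (ipR_le_n2_mul _ _) ?_
              have hn2u : n2 u = 1 := by
                rw [n2, hunit u hu, Real.sqrt_one]
              rw [hn2u, mul_one, ← dist2_eq_n2, ← dist2_symm]
              exact hqd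
            have hlampos : 0 < lam u := lt_of_lt_of_le hδpos (hlamδ u hu)
            have hmax : max (b₁ u) (b₂ u) ≤ b₁ u + (b₂ u - ip q₂ u) + g := by
              rcases le_total (b₂ u) (b₁ u) with hcase | hcase
              · rw [max_eq_left hcase]; linarith
              · rw [max_eq_right hcase]; linarith
            have hexp : ipR (cst p₂ - cst q₂) u = ip p₂ u - ip q₂ u := ipR_cst_sub _ _ _
            nlinarith [hmax, hlampos]
          refine le_trans (Finset.sum_le_sum key) ?_
          rw [Finset.sum_add_distrib, Finset.sum_add_distrib, Finset.sum_add_distrib]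
          have hz := hlam0 (cst p₂ - cst q₂)
          have hsumconst : ∑ u ∈ SBf, lam u * (g + 1) = (∑ v ∈ SBf, lam v) * (g + 1) :=
            (Finset.sum_mul _ _ _).symm
          have hfin : C₁ * (2 * (n₁ : ℝ) - 1) + C₁ * (2 * (n₂ : ℝ) - 1) + C₁ =
              C₁ * (2 * ((n₁ + n₂ : ℕ) : ℝ) - 1) := by
            push_cast
            ring
          rw [hsumconst]
          have hgκ : (∑ v ∈ SBf, lam v) * (g + 1) ≤ C₁ := by
            simpa [hgdef] using hC₁L
          linarith [hS₁, hS₂]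
      · exact hWgood w (Multiset.mem_of_mem_erase (Multiset.mem_of_mem_erase hw))

/-- The starting configuration of the covering algorithm satisfies the invariant. -/
lemma base_inv (SB : Set (ℝ × ℝ)) (SBf : Finset (ℝ × ℝ)) (lam : (ℝ × ℝ) → ℝ) (C₁ : ℝ)
    (cl : List Site) (Dhat : Set Site) (ph : Site) (hph : ph ∈ Dhat)
    (bh : (ℝ × ℝ) → ℝ) (hDh : ∀ z ∈ Dhat, ∀ u ∈ SB, ip z u < bh u)
    (hC₁S : ∑ v ∈ SBf, lam v * (bh v - ip ph v) ≤ C₁) :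
    InvDat SB SBf lam C₁ cl.length ↑(cl.map fun v => (fun z => z + v) '' Dhat) := by
  refine ⟨↑(cl.map fun v =>
    (((fun z => z + v) '' Dhat : Set Site), (ph + v : Site),
      (fun u => bh u + ip v u), (1 : ℕ))), ?_, ?_, ?_⟩
  · rw [Multiset.map_coe, List.map_map]
    rfl
  · rw [Multiset.map_coe, List.map_map]
    show ((cl.map fun _ => (1 : ℕ)) : Multiset ℕ).sum = cl.length
    rw [Multiset.sum_coe]
    induction cl with
    | nil => simp
    | cons hd tl ih => simp [ih]; omega
  · intro w hw
    rw [Multiset.mem_coe, List.mem_map] at hw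
    obtain ⟨v, _, rfl⟩ := hw
    refine ⟨le_refl 1, ⟨ph, hph, rfl⟩, ?_, ?_, ?_⟩
    · rintro u hu _ ⟨z, hz, rfl⟩
      simp only [ip_add]
      have := hDh z hz u hu
      linarith
    · intro u hu
      simp only [ip_add]
      have := hDh ph hph u hu
      linarith
    · simp only [ip_add]
      have he : ∀ u ∈ SBf, lam u * (bh u + ip v u - (ip ph u + ip v u)) =
          lam u * (bh u - ip ph u) := by
        intro u _
        ring
      rw [Finset.sum_congr rfl he]
      push_cast
      linarith

set_option maxHeartbeats 2000000 in
/-- **Extremal lemma for `α`-covered droplets (Lemma 5.4).**  For a balanced critical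
family and a sufficiently large droplet `D̂`, there is a constant `c > 0` such that if a
droplet `D` is `α`-covered with respect to `A`, then `D ∩ A` contains at least
`c · diam D` pairwise disjoint `α`-clusters. -/
theorem extremal_alphaCovered
    (U : Finset (Finset Site)) (hU : ∀ X ∈ U, (0 : Site) ∉ X)
    (hcrit : Critical U) (hbal : BalancedCond U)
    (a : ℕ) (ha : famDifficulty U = (a : ℕ∞))
    (SB : Set (ℝ × ℝ)) (hSB : ValidSB U a SB) :
    ∃ R₀ : ℝ, ∀ Dhat : Set Site, IsDroplet SB Dhat →
      {x : Site | dist2 x 0 ≤ R₀} ⊆ Dhat →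
      ∃ c : ℝ, 0 < c ∧ ∀ A D : Set Site, IsDroplet SB D →
        AlphaCovered (kappaB U SB a) a SB Dhat A D →
        ∃ T : Finset (Finset Site),
          (∀ B ∈ T, IsCluster (kappaB U SB a) a B ∧ ↑B ⊆ D ∩ A) ∧
          (∀ B₁ ∈ T, ∀ B₂ ∈ T, B₁ ≠ B₂ → Disjoint B₁ B₂) ∧
          c * diam2 D ≤ (T.card : ℝ) := by
  classical
  obtain ⟨hSBfin, hSBstable, _hSBdiff, hSBsemi⟩ := hSB
  have hκ0 : 0 ≤ kappaB U SB a := kappaB_nonneg U SB a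
  set κ := kappaB U SB a with hκdef
  set SBf := hSBfin.toFinset with hSBfdef
  have hmem : ∀ u : ℝ × ℝ, u ∈ SBf ↔ u ∈ SB := fun u => hSBfin.mem_toFinset
  have hunit : ∀ u ∈ SBf, u.1 ^ 2 + u.2 ^ 2 = 1 :=
    fun u hu => (hSBstable ((hmem u).1 hu)).1
  obtain ⟨u₁, hu₁SB, _⟩ := hSBsemi (1, 0) (by simp [unitVec])
  have hne : SBf.Nonempty := ⟨u₁, (hmem _).2 hu₁SB⟩
  -- the compactness constant δ
  obtain ⟨δ, hδpos, hδ⟩ : ∃ δ > 0, ∀ w : ℝ × ℝ, unitVec w → ∃ u ∈ SBf, δ ≤ ipR u w := by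
    have hKc : IsCompact {w : ℝ × ℝ | w.1 ^ 2 + w.2 ^ 2 = 1} := by
      apply IsCompact.of_isClosed_subset (isCompact_closedBall (0 : ℝ × ℝ) 1)
      · exact isClosed_eq (by fun_prop) continuous_const
      · intro w hw
        simp only [Set.mem_setOf_eq] at hw
        rw [Metric.mem_closedBall, Prod.dist_eq]
        have h1 : |w.1| ≤ 1 := by
          apply le_of_sq_le (by norm_num); rw [sq_abs]; nlinarith
        have h2 : |w.2| ≤ 1 := by
          apply le_of_sq_le (by norm_num); rw [sq_abs]; nlinarith
        simp only [Real.dist_eq, Prod.fst_zero, Prod.snd_zero, sub_zero]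
        exact max_le h1 h2
    have hcont : ∀ (s : Finset (ℝ × ℝ)) (hs : s.Nonempty),
        Continuous (fun w : ℝ × ℝ => s.sup' hs (fun u => ipR u w)) := by
      intro s hs
      induction hs using Finset.Nonempty.cons_induction with
      | singleton a =>
        simp only [Finset.sup'_singleton]
        exact continuous_ipR a
      | cons a s ha hs ih =>
        simp only [Finset.sup'_cons hs]
        exact Continuous.max (continuous_ipR a) ih
    obtain ⟨w₀, hw₀K, hw₀min⟩ := hKc.exists_isMinOn ⟨(1, 0), by norm_num⟩
      ((hcont SBf hne).continuousOn)
    refine ⟨SBf.sup' hne (fun u => ipR u w₀), ?_, ?_⟩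
    · obtain ⟨u, huSB, hu⟩ := hSBsemi w₀ hw₀K
      exact lt_of_lt_of_le hu (Finset.le_sup' (fun u => ipR u w₀) ((hmem u).2 huSB))
    · intro w hw
      obtain ⟨u, hu, he⟩ := Finset.exists_mem_eq_sup' hne (fun u => ipR u w)
      refine ⟨u, hu, ?_⟩
      have h2 : SBf.sup' hne (fun u => ipR u w₀) ≤ SBf.sup' hne (fun u => ipR u w) :=
        hw₀min hw
      rw [he] at h2
      exact h2
  have hδ2 : ∀ z : ℝ × ℝ, ∃ u ∈ SBf, δ * n2 z ≤ ipR z u := by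
    intro z
    by_cases hz : z = 0
    · obtain ⟨u, hu⟩ := hne
      refine ⟨u, hu, ?_⟩
      simp [hz, n2, ipR]
    · have hn2 : 0 < n2 z := by
        rcases lt_or_eq_of_le (n2_nonneg z) with h | h
        · exact h
        · exfalso
          apply hz
          have := sq_n2 z
          rw [← h] at this
          have h1 : z.1 ^ 2 + z.2 ^ 2 = 0 := by simpa using this.symm
          have h2 : z.1 = 0 := by nlinarith [sq_nonneg z.1, sq_nonneg z.2]
          have h3 : z.2 = 0 := by nlinarith [sq_nonneg z.1, sq_nonneg z.2]
          exact Prod.ext h2 h3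
      obtain ⟨u, hu, hw⟩ := hδ (z.1 / n2 z, z.2 / n2 z)
        (by
          show (z.1 / n2 z) ^ 2 + (z.2 / n2 z) ^ 2 = 1
          have := sq_n2 z
          field_simp
          linarith)
      refine ⟨u, hu, ?_⟩
      have he : ipR u (z.1 / n2 z, z.2 / n2 z) = ipR z u / n2 z := by
        simp only [ipR]
        field_simp
      rw [he, le_div_iff₀ hn2] at hw
      exact hw
  have hbound : ∀ (z : ℝ × ℝ) (β : ℝ), (∀ u ∈ SBf, ipR z u ≤ β) → δ * n2 z ≤ β := by
    intro z β h
    obtain ⟨u, hu, h2⟩ := hδ2 z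
    exact le_trans h2 (h u hu)
  -- the balanced weights
  obtain ⟨lam, hlamδ, hlam0⟩ : ∃ lam : (ℝ × ℝ) → ℝ, (∀ v ∈ SBf, δ ≤ lam v) ∧
      ∀ z : ℝ × ℝ, ∑ v ∈ SBf, lam v * ipR z v = 0 := by
    have hhull : ∀ z : ℝ × ℝ, n2 z ≤ δ → z ∈ convexHull ℝ (SBf : Set (ℝ × ℝ)) := by
      intro z hz
      by_contra hzc
      obtain ⟨f, c, hfs, hfz⟩ := geometric_hahn_banach_closed_point
        (convex_convexHull ℝ _) (SBf.finite_toSet.isCompact_convexHull (𝕜 := ℝ)).isClosed hzc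
      set m : ℝ × ℝ := (f (1, 0), f (0, 1)) with hm
      have hfy : ∀ y : ℝ × ℝ, f y = ipR y m := by
        intro y
        have hy : y = y.1 • ((1 : ℝ), (0 : ℝ)) + y.2 • ((0 : ℝ), (1 : ℝ)) := by
          ext <;> simp
        rw [hy, map_add, _root_.map_smul, _root_.map_smul]
        simp only [ipR, hm, smul_eq_mul]
        have e1 : (y.1 • ((1 : ℝ), (0 : ℝ)) + y.2 • ((0 : ℝ), (1 : ℝ))).1 = y.1 := by simp
        have e2 : (y.1 • ((1 : ℝ), (0 : ℝ)) + y.2 • ((0 : ℝ), (1 : ℝ))).2 = y.2 := by simp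
        rw [e1, e2]
      obtain ⟨u, hu, hum⟩ := hδ2 m
      have h1 : ipR u m < c := by
        rw [← hfy]
        exact hfs u (subset_convexHull ℝ _ (by exact_mod_cast hu))
      have h2 : c < ipR z m := by rw [← hfy]; exact hfz
      have h3 : ipR z m ≤ n2 z * n2 m := ipR_le_n2_mul z m
      have h4 : ipR m u = ipR u m := by simp [ipR]; ring
      have h5 : n2 z * n2 m ≤ δ * n2 m := mul_le_mul_of_nonneg_right hz (n2_nonneg m)
      rw [h4] at hum
      linarith
    have hcomb : ∀ u₀ : ℝ × ℝ, ∃ μ : (ℝ × ℝ) → ℝ, u₀ ∈ SBf →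
        ((∀ v ∈ SBf, 0 ≤ μ v) ∧ (∑ v ∈ SBf, μ v • v) = (-δ) • u₀) := by
      intro u₀
      by_cases hu₀ : u₀ ∈ SBf
      · have hmem2 : ((-δ) • u₀ : ℝ × ℝ) ∈ convexHull ℝ (SBf : Set (ℝ × ℝ)) := by
          apply hhull
          have h1 := hunit u₀ hu₀
          have hval : n2 ((-δ) • u₀) = δ := by
            have e1 : ((-δ) • u₀ : ℝ × ℝ).1 = -δ * u₀.1 := rfl
            have e2 : ((-δ) • u₀ : ℝ × ℝ).2 = -δ * u₀.2 := rfl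
            rw [n2, e1, e2,
              show (-δ * u₀.1) ^ 2 + (-δ * u₀.2) ^ 2 = δ ^ 2 * (u₀.1 ^ 2 + u₀.2 ^ 2) by ring,
              h1, mul_one]
            exact Real.sqrt_sq hδpos.le
          rw [hval]
        rw [Finset.convexHull_eq] at hmem2
        obtain ⟨μ, hμ0, hμ1, hμc⟩ := hmem2
        refine ⟨μ, fun _ => ⟨hμ0, ?_⟩⟩
        rw [← hμc, Finset.centerMass_eq_of_sum_1 _ _ hμ1]
        simp [id]
      · exact ⟨0, fun hcon => absurd hcon hu₀⟩
    choose μ hμ using hcomb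
    refine ⟨fun v => δ + ∑ u₀ ∈ SBf, μ u₀ v, ?_, ?_⟩
    · intro v hv
      have h0 : 0 ≤ ∑ u₀ ∈ SBf, μ u₀ v :=
        Finset.sum_nonneg fun u₀ hu₀ => (hμ u₀ hu₀).1 v hv
      show δ ≤ δ + ∑ u₀ ∈ SBf, μ u₀ v
      linarith
    · intro z
      have hvec : ∑ v ∈ SBf, (δ + ∑ u₀ ∈ SBf, μ u₀ v) • v = (0 : ℝ × ℝ) := by
        have e1 : ∀ v ∈ SBf, (δ + ∑ u₀ ∈ SBf, μ u₀ v) • v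
            = δ • v + ∑ u₀ ∈ SBf, μ u₀ v • v := by
          intro v _
          rw [add_smul, Finset.sum_smul]
        rw [Finset.sum_congr rfl e1, Finset.sum_add_distrib, Finset.sum_comm]
        have e2 : ∀ u₀ ∈ SBf, ∑ v ∈ SBf, μ u₀ v • v = (-δ) • u₀ :=
          fun u₀ h => (hμ u₀ h).2
        rw [Finset.sum_congr rfl e2, ← Finset.sum_add_distrib]
        apply Finset.sum_eq_zero
        intro v _
        rw [← add_smul]
        norm_num
      have hx : ∑ v ∈ SBf, (δ + ∑ u₀ ∈ SBf, μ u₀ v) * v.1 = 0 := by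
        have h := congrArg Prod.fst hvec
        rw [Prod.fst_sum] at h
        simpa [smul_eq_mul] using h
      have hy : ∑ v ∈ SBf, (δ + ∑ u₀ ∈ SBf, μ u₀ v) * v.2 = 0 := by
        have h := congrArg Prod.snd hvec
        rw [Prod.snd_sum] at h
        simpa [smul_eq_mul] using h
      have e3 : ∀ v ∈ SBf, (δ + ∑ u₀ ∈ SBf, μ u₀ v) * ipR z v
          = z.1 * ((δ + ∑ u₀ ∈ SBf, μ u₀ v) * v.1)
            + z.2 * ((δ + ∑ u₀ ∈ SBf, μ u₀ v) * v.2) := by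
        intro v _
        simp only [ipR]
        ring
      rw [Finset.sum_congr rfl e3, Finset.sum_add_distrib, ← Finset.mul_sum, ← Finset.mul_sum,
        hx, hy]
      ring
  set L := ∑ v ∈ SBf, lam v with hLdef
  have hL0 : 0 < L := by
    have h1 : ∑ v ∈ SBf, δ ≤ L := Finset.sum_le_sum fun v hv => hlamδ v hv
    have h2 : (0 : ℝ) < ∑ v ∈ SBf, δ := by
      rw [Finset.sum_const]
      have := Finset.card_pos.mpr hne
      have : (1 : ℝ) ≤ SBf.card := by exact_mod_cast this
      rw [nsmul_eq_mul]
      nlinarith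
    linarith
  -- the droplet `Dhat`
  refine ⟨0, ?_⟩
  intro Dhat hDhat _hball
  obtain ⟨⟨ph, hph⟩, ahat, hrep⟩ := hDhat
  set bh : (ℝ × ℝ) → ℝ := fun u => ip (ahat u) u with hbhdef
  have hDh : ∀ z ∈ Dhat, ∀ u ∈ SB, ip z u < bh u := by
    intro z hz u hu
    rw [hrep] at hz
    have h2 : ip (z - ahat u) u < 0 := Set.mem_iInter₂.mp hz u hu
    rw [ip_sub] at h2
    simp only [hbhdef]
    linarith
  set βh := SBf.sup' hne (fun u => bh u - ip ph u) with hβhdef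
  have hβh : ∀ u ∈ SBf, bh u - ip ph u ≤ βh :=
    fun u hu => Finset.le_sup' (fun u => bh u - ip ph u) hu
  have hβh0 : 0 ≤ βh := by
    obtain ⟨u, hu⟩ := hne
    have h1 := hDh ph hph u ((hmem u).1 hu)
    have h2 := hβh u hu
    linarith
  set dh := 2 * βh / δ with hdhdef
  have hdh0 : 0 ≤ dh := div_nonneg (by linarith) hδpos.le
  have hDdiam : ∀ z ∈ Dhat, ∀ z' ∈ Dhat, dist2 z z' ≤ dh := by
    have hhalf : ∀ z ∈ Dhat, dist2 z ph ≤ βh / δ := by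
      intro z hz
      rw [dist2_eq_n2]
      have h := hbound (cst z - cst ph) βh ?_
      · rw [le_div_iff₀ hδpos]
        linarith [h]
      · intro u hu
        rw [ipR_cst_sub]
        have h1 := hDh z hz u ((hmem u).1 hu)
        have h2 := hβh u hu
        linarith
    intro z hz z' hz'
    have h1 := hhalf z hz
    have h2 := hhalf z' hz'
    have h3 := dist2_triangle z ph z'
    rw [dist2_symm ph z'] at h3
    have h4 : dh = βh / δ + βh / δ := by rw [hdhdef]; ring
    linarith
  set S₀ := ∑ v ∈ SBf, lam v * (bh v - ip ph v) with hS₀def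
  set C₁ := max S₀ (L * (dh + 2 * κ + 1)) with hC₁def
  have hC₁S : S₀ ≤ C₁ := le_max_left _ _
  have hC₁L : L * (dh + 2 * κ + 1) ≤ C₁ := le_max_right _ _
  have hC₁0 : 0 < C₁ :=
    lt_of_lt_of_le (mul_pos hL0 (by linarith)) hC₁L
  refine ⟨δ ^ 2 / (4 * C₁), by positivity, ?_⟩
  intro A D hD hcov
  obtain ⟨B, cl, hlen, hBcl, hBdisj, hBmax, _hBin, hRT⟩ := hcov
  have ha1 : 1 ≤ a := by
    rcases Nat.eq_zero_or_pos a with h0 | h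
    · exfalso
      have hcl0 : IsCluster κ a (∅ : Finset Site) := by
        refine ⟨by simp [h0], ?_⟩
        intro x hx
        simp at hx
      obtain ⟨Bi, _, hnd⟩ := hBmax ∅ hcl0 (by simp)
      exact hnd (Finset.disjoint_left.mpr (by simp))
    · exact h
  set k := cl.length with hkdef
  -- transport of the invariant
  have hfinal : InvDat SB SBf lam C₁ k {D} := by
    have htrans : ∀ {M N : Multiset (Set Site)},
        Relation.ReflTransGen (CoverStep SB κ Dhat) M N →
        InvDat SB SBf lam C₁ k M → InvDat SB SBf lam C₁ k N := by
      intro M N h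
      induction h with
      | refl => exact id
      | tail _ h2 ih =>
        exact fun hM => step_preserve SB SBf hmem hunit lam δ hδpos hlamδ hlam0 κ dh
          hκ0 hdh0 Dhat hDdiam C₁ hC₁L k _ _ h2 (ih hM)
    exact htrans hRT (base_inv SB SBf lam C₁ cl Dhat ph hph bh hDh hC₁S)
  obtain ⟨W, hWfst, hWsum, hWgood⟩ := hfinal
  obtain ⟨w, hWw, hwD⟩ := Multiset.map_eq_singleton.mp hWfst
  obtain ⟨E₀, p, b, n⟩ := w
  simp only at hwD
  obtain ⟨hn1, hpD, hbb, hpb, hSsum⟩ := hWgood _ (by rw [hWw]; exact Multiset.mem_singleton_self _)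
  simp only at hn1 hpD hbb hpb hSsum
  rw [hwD] at hpD hbb
  have hkn : n = k := by
    rw [hWw] at hWsum
    simpa using hWsum
  subst hkn
  have hk1 : 1 ≤ k := hn1
  have hkR : (1 : ℝ) ≤ (k : ℝ) := by exact_mod_cast hk1
  have hBd0 : (0 : ℝ) ≤ C₁ * (2 * (k : ℝ) - 1) := by nlinarith
  -- the diameter bound
  have hanch : ∀ x ∈ D, dist2 x p ≤ C₁ * (2 * (k : ℝ) - 1) / δ ^ 2 := by
    intro x hx
    have hall : ∀ u ∈ SBf, ipR (cst x - cst p) u ≤ C₁ * (2 * (k : ℝ) - 1) / δ := by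
      intro u hu
      have huSB := (hmem u).1 hu
      have h1 : ip x u ≤ b u := hbb u huSB x hx
      have hterm : lam u * (b u - ip p u) ≤ C₁ * (2 * (k : ℝ) - 1) := by
        refine le_trans (Finset.single_le_sum (f := fun v => lam v * (b v - ip p v)) ?_ hu) hSsum
        intro v hv
        have hv1 := hlamδ v hv
        have hv2 := hpb v ((hmem v).1 hv)
        show 0 ≤ lam v * (b v - ip p v)
        nlinarith
      have hlu := hlamδ u hu
      have hbp : 0 ≤ b u - ip p u := by have := hpb u huSB; linarith
      have h2 : δ * (b u - ip p u) ≤ C₁ * (2 * (k : ℝ) - 1) := by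
        nlinarith [mul_nonneg (sub_nonneg.mpr hlu) hbp]
      rw [ipR_cst_sub, le_div_iff₀ hδpos]
      nlinarith
    have h := hbound _ _ hall
    rw [← dist2_eq_n2] at h
    rw [le_div_iff₀ hδpos] at h
    rw [le_div_iff₀ (by positivity : (0:ℝ) < δ ^ 2)]
    nlinarith [h]
  have hdiam : diam2 D ≤ 2 * (C₁ * (2 * (k : ℝ) - 1) / δ ^ 2) := by
    apply Real.sSup_le
    · rintro d ⟨x, hx, y, hy, rfl⟩
      have h1 := hanch x hx
      have h2 := hanch y hy
      have h3 := dist2_triangle x p y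
      rw [dist2_symm p y] at h3
      linarith
    · have : (0:ℝ) ≤ C₁ * (2 * (k : ℝ) - 1) / δ ^ 2 := by positivity
      linarith
  -- the family of clusters
  have hBne : ∀ Bi ∈ B, Bi.Nonempty := by
    intro Bi hBi
    rw [← Finset.card_pos, (hBcl Bi hBi).1.1]
    exact ha1
  have hBnodup : B.Nodup := by
    have hgen : ∀ l : List (Finset Site), (∀ x ∈ l, x.Nonempty) →
        l.Pairwise (fun B₁ B₂ => Disjoint B₁ B₂) → l.Nodup := by
      intro l
      induction l with
      | nil => intro _ _; simp
      | cons hd tl ih =>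
        intro hne' hp
        rw [List.pairwise_cons] at hp
        rw [List.nodup_cons]
        refine ⟨?_, ih (fun x hx => hne' x (List.mem_cons_of_mem _ hx)) hp.2⟩
        intro hhd
        have hdisj := hp.1 hd hhd
        rw [disjoint_self] at hdisj
        exact (hne' hd List.mem_cons_self).ne_empty (by simpa using hdisj)
    exact hgen B hBne hBdisj
  refine ⟨B.toFinset, ?_, ?_, ?_⟩
  · intro Bi hBi
    exact hBcl Bi (List.mem_toFinset.mp hBi)
  · intro B₁ hB₁ B₂ hB₂ hne'
    exact hBdisj.forall
      (List.mem_toFinset.mp hB₁) (List.mem_toFinset.mp hB₂) hne'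
  · rw [List.toFinset_card_of_nodup hBnodup, hlen]
    have heq : δ ^ 2 / (4 * C₁) * (2 * (C₁ * (2 * (k : ℝ) - 1) / δ ^ 2))
        = (2 * (k : ℝ) - 1) / 2 := by
      field_simp
      ring
    have hmono : δ ^ 2 / (4 * C₁) * diam2 D
        ≤ δ ^ 2 / (4 * C₁) * (2 * (C₁ * (2 * (k : ℝ) - 1) / δ ^ 2)) :=
      mul_le_mul_of_nonneg_left hdiam (by positivity)
    rw [heq] at hmono
    show δ ^ 2 / (4 * C₁) * diam2 D ≤ ((cl.length : ℕ) : ℝ)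
    have hkcast : ((cl.length : ℕ) : ℝ) = (k : ℝ) := by rw [hkdef]
    rw [hkcast]
    linarith

end BP
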